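/- arXiv:1705.10645 — 3 statements merged into one kernel-verified Lean document; each statement's English description precedes it below -/
import Mathlib

section
/- Let G be a compact Hausdorff topological semigroup (associative, jointly continuous multiplication) satisfying both cancellation laws: gh = gk implies h = k, and hg = kg implies h = k. Then G is a topological group. -/
/-- A nonempty compact Hausdorff topological semigroup (jointly continuous
associative multiplication) satisfying both cancellation laws is a topological
group: it has a two-sided identity and a continuous inverse. -/
theorem compact_cancellative_semigroup_is_topological_group
    (G : Type*) [TopologicalSpace G] [T2Space G] [CompactSpace G]
    [Semigroup G] [ContinuousMul G] [Nonempty G]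
    (hl : ∀ g h k : G, g * h = g * k → h = k)
    (hr : ∀ g h k : G, h * g = k * g → h = k) :
    ∃ (e : G) (inv : G → G),
      (∀ g : G, e * g = g) ∧ (∀ g : G, g * e = g) ∧
      (∀ g : G, inv g * g = e) ∧ (∀ g : G, g * inv g = e) ∧
      Continuous inv := by
  classical
  have hmul_left : ∀ r : G, Continuous (· * r) := fun r =>
    continuous_id.mul continuous_const
  obtain ⟨e, he⟩ := exists_idempotent_of_compact_t2_of_continuous_mul_left hmul_left
  have heL : ∀ g : G, e * g = g := fun g =>
    hl e (e * g) g (by rw [← mul_assoc, he])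
  have heR : ∀ g : G, g * e = g := fun g =>
    hr e (g * e) g (by rw [mul_assoc, he])
  -- existence of right inverses
  have hinv : ∀ g : G, ∃ y : G, g * y = e := by
    intro g
    let p : ℕ → G := fun n => Nat.rec g (fun _ q => g * q) n
    have hp0 : p 0 = g := rfl
    have hps : ∀ n, p (n + 1) = g * p n := fun n => rfl
    have hpmul : ∀ m n, p m * p n = p (m + n + 1) := by
      intro m n
      induction m with
      | zero => simp [hp0, hps]
      | succ k ih =>
          rw [hps, mul_assoc, ih, show k + 1 + n + 1 = (k + n + 1) + 1 by omega, hps]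
    have hmulmem : ∀ x ∈ closure (Set.range p), ∀ y ∈ closure (Set.range p),
        x * y ∈ closure (Set.range p) := by
      have key : ∀ x ∈ Set.range p, ∀ y ∈ Set.range p, x * y ∈ Set.range p := by
        rintro _ ⟨m, rfl⟩ _ ⟨n, rfl⟩
        exact ⟨m + n + 1, (hpmul m n).symm⟩
      let T : Subsemigroup G :=
        { carrier := Set.range p
          mul_mem' := fun ha hb => key _ ha _ hb }
      exact fun x hx y hy => T.topologicalClosure.mul_mem hx hy
    have hScomp : IsCompact (closure (Set.range p)) := isClosed_closure.isCompact
    obtain ⟨m, hmS, hm⟩ := exists_idempotent_in_compact_subsemigroup hmul_left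
      (closure (Set.range p)) ⟨p 0, subset_closure ⟨0, rfl⟩⟩ hScomp hmulmem
    have hme : m = e := hl m m e (by rw [heR]; exact hm)
    have heS : e ∈ closure (Set.range p) := hme ▸ hmS
    -- the image of `insert e (closure (range p))` under left mult by g is closed
    -- and contains range p, hence contains e
    have hKcomp : IsCompact ((fun y => g * y) '' insert e (closure (Set.range p))) :=
      (hScomp.insert e).image (continuous_const.mul continuous_id)
    have hsub : Set.range p ⊆ (fun y => g * y) '' insert e (closure (Set.range p)) := by
      rintro _ ⟨n, rfl⟩
      cases n with
      | zero => exact ⟨e, Set.mem_insert _ _, heR g⟩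
      | succ k => exact ⟨p k, Set.mem_insert_of_mem _ (subset_closure ⟨k, rfl⟩), (hps k).symm⟩
    have heK : e ∈ (fun y => g * y) '' insert e (closure (Set.range p)) :=
      closure_minimal hsub hKcomp.isClosed heS
    obtain ⟨y, -, hy⟩ := heK
    exact ⟨y, hy⟩
  let inv : G → G := fun g => Classical.choose (hinv g)
  have hinvR : ∀ g : G, g * inv g = e := fun g => Classical.choose_spec (hinv g)
  have hinvL : ∀ g : G, inv g * g = e := fun g =>
    hl g (inv g * g) e (by rw [← mul_assoc, hinvR, heL, heR])
  -- continuity of inv via the closed graph / compactness argument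
  have hset : IsClosed {q : G × G | q.1 * q.2 = e} :=
    isClosed_eq (continuous_fst.mul continuous_snd) continuous_const
  haveI : CompactSpace {q : G × G // q.1 * q.2 = e} :=
    isCompact_iff_compactSpace.mp hset.isCompact
  let f : {q : G × G // q.1 * q.2 = e} ≃ G :=
    { toFun := fun r => r.1.1
      invFun := fun g => ⟨(g, inv g), hinvR g⟩
      left_inv := by
        rintro ⟨⟨a, b⟩, hab⟩
        have hb : inv a = b := hl a (inv a) b (by rw [hinvR a, hab])
        exact Subtype.ext (by simp [hb])
      right_inv := fun g => rfl }
  have hfc : Continuous f := continuous_fst.comp continuous_subtype_val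
  let h : {q : G × G // q.1 * q.2 = e} ≃ₜ G := hfc.homeoOfEquivCompactToT2
  have hcont : Continuous inv := by
    have hrw : inv = fun g => ((h.symm g : G × G)).2 := rfl
    rw [hrw]
    exact continuous_snd.comp (continuous_subtype_val.comp h.symm.continuous)
  exact ⟨e, inv, heL, heR, hinvL, hinvR, hcont⟩
end

section
/- Let G be a compact group and A = C(G) the C*-algebra of continuous complex-valued functions on G. Define Δ : C(G) → C(G × G) by Δ(f)(g,h) = f(gh). Then the linear span of functions of the form (g,h) ↦ f₁(g)·f₂(gh), for f₁, f₂ ∈ C(G), is dense in C(G × G). -/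
open SeparationQuotient Function

private lemma span_mul_closed {X : Type*} [TopologicalSpace X]
    {S : Set C(X, ℂ)} (hmulS : ∀ F₁ ∈ S, ∀ F₂ ∈ S, F₁ * F₂ ∈ S) :
    ∀ x ∈ Submodule.span ℂ S, ∀ y ∈ Submodule.span ℂ S, x * y ∈ Submodule.span ℂ S := by
  have step : ∀ F ∈ S, ∀ x ∈ Submodule.span ℂ S, x * F ∈ Submodule.span ℂ S := by
    intro F hF x hx
    induction hx using Submodule.span_induction with
    | mem z hz => exact Submodule.subset_span (hmulS z hz F hF)
    | zero => simpa using Submodule.zero_mem _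
    | add a b _ _ ha hb => simpa [add_mul] using Submodule.add_mem _ ha hb
    | smul c a _ ha => simpa [smul_mul_assoc] using Submodule.smul_mem _ c ha
  intro x hx y hy
  induction hy using Submodule.span_induction with
  | mem z hz => exact step z hz x hx
  | zero => simpa using Submodule.zero_mem _
  | add a b _ _ ha hb => simpa [mul_add] using Submodule.add_mem _ ha hb
  | smul c a _ ha => simpa [mul_smul_comm] using Submodule.smul_mem _ c ha

private lemma span_star_closed {X : Type*} [TopologicalSpace X]
    {S : Set C(X, ℂ)} (hstarS : ∀ F ∈ S, star F ∈ S) :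
    ∀ x ∈ Submodule.span ℂ S, star x ∈ Submodule.span ℂ S := by
  intro x hx
  induction hx using Submodule.span_induction with
  | mem z hz => exact Submodule.subset_span (hstarS z hz)
  | zero => simpa using Submodule.zero_mem _
  | add a b _ _ ha hb => simpa [star_add] using Submodule.add_mem _ ha hb
  | smul c a _ ha =>
      simpa [star_smul] using Submodule.smul_mem _ (starRingEnd ℂ c) ha

/-- The Hausdorff case, via Stone–Weierstrass. -/
private lemma aux_dense (G : Type*) [TopologicalSpace G] [Group G] [IsTopologicalGroup G]
    [CompactSpace G] [T2Space G] :
    Dense ((Submodule.span ℂ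
      {F : C(G × G, ℂ) | ∃ f₁ f₂ : C(G, ℂ), ∀ p : G × G, F p = f₁ p.1 * f₂ (p.1 * p.2)}
      : Submodule ℂ C(G × G, ℂ)) : Set C(G × G, ℂ)) := by
  set S : Set C(G × G, ℂ) :=
    {F : C(G × G, ℂ) | ∃ f₁ f₂ : C(G, ℂ), ∀ p : G × G, F p = f₁ p.1 * f₂ (p.1 * p.2)} with hS
  have hone : (1 : C(G × G, ℂ)) ∈ S := ⟨1, 1, fun p => (one_mul 1).symm⟩
  have hmulS : ∀ F₁ ∈ S, ∀ F₂ ∈ S, F₁ * F₂ ∈ S := by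
    rintro F₁ ⟨f₁, f₂, h₁⟩ F₂ ⟨g₁, g₂, h₂⟩
    exact ⟨f₁ * g₁, f₂ * g₂, fun p => by simp [h₁ p, h₂ p]; ring⟩
  have hstarS : ∀ F ∈ S, star F ∈ S := by
    rintro F ⟨f₁, f₂, h⟩
    exact ⟨star f₁, star f₂, fun p => by simp [h p]⟩
  -- continuous functions separate points of a compact Hausdorff space
  have hsep : ∀ x y : G, x ≠ y → ∃ f : C(G, ℂ), f x ≠ f y := by
    intro x y hxy
    obtain ⟨f, hf0, hf1, -⟩ := exists_continuous_zero_one_of_isClosed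
      (isClosed_singleton (x := x)) (isClosed_singleton (x := y))
      (by simpa [Set.disjoint_singleton] using hxy)
    refine ⟨(ContinuousMap.mk Complex.ofReal Complex.continuous_ofReal).comp f, ?_⟩
    have h0 : f x = 0 := hf0 rfl
    have h1 : f y = 1 := hf1 rfl
    simp [h0, h1]
  set A := StarAlgebra.adjoin ℂ S with hA
  have hsepA : A.SeparatesPoints := by
    rintro ⟨g, h⟩ ⟨g', h'⟩ hne
    by_cases hg : g = g'
    · have hgh : g * h ≠ g' * h' := by
        subst hg
        intro heq
        exact hne (by simpa using mul_left_cancel heq)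
      obtain ⟨f, hf⟩ := hsep (g * h) (g' * h') hgh
      have hmem : (ContinuousMap.comp f ⟨fun p : G × G => p.1 * p.2, by fun_prop⟩) ∈ S :=
        ⟨1, f, fun p => by simp⟩
      exact ⟨_, ⟨_, StarAlgebra.subset_adjoin ℂ S hmem, rfl⟩, by simpa using hf⟩
    · obtain ⟨f, hf⟩ := hsep g g' hg
      have hmem : (ContinuousMap.comp f ⟨fun p : G × G => p.1, by fun_prop⟩) ∈ S :=
        ⟨f, 1, fun p => by simp⟩
      exact ⟨_, ⟨_, StarAlgebra.subset_adjoin ℂ S hmem, rfl⟩, by simpa using hf⟩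
  have hAtop := ContinuousMap.starSubalgebra_topologicalClosure_eq_top_of_separatesPoints A hsepA
  -- the adjoin is contained in the span
  have hAle : (A : Set C(G × G, ℂ)) ⊆ (Submodule.span ℂ S : Submodule ℂ C(G × G, ℂ)) := by
    intro a ha
    induction ha using StarAlgebra.adjoin_induction with
    | mem z hz => exact Submodule.subset_span hz
    | algebraMap r =>
        rw [Algebra.algebraMap_eq_smul_one]
        exact Submodule.smul_mem _ r (Submodule.subset_span hone)
    | add x y _ _ hx hy => exact Submodule.add_mem _ hx hy
    | mul x y _ _ hx hy => exact span_mul_closed hmulS x hx y hy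
    | star x _ hx => exact span_star_closed hstarS x hx
  rw [dense_iff_closure_eq]
  apply Set.eq_univ_of_univ_subset
  have h1 : closure (A : Set C(G × G, ℂ)) = Set.univ := by
    have := congrArg (fun (B : StarSubalgebra ℂ C(G × G, ℂ)) => (B : Set C(G × G, ℂ))) hAtop
    exact this
  rw [← h1]
  exact closure_mono hAle

/-- For a compact group `G`, the linear span of the functions
`(g, h) ↦ f₁ g * f₂ (g * h)` with `f₁ f₂ ∈ C(G, ℂ)` is dense in `C(G × G, ℂ)`. -/
theorem span_translates_dense_in_C_of_compact_group
    (G : Type*) [TopologicalSpace G] [Group G] [IsTopologicalGroup G] [CompactSpace G] :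
    Dense ((Submodule.span ℂ
      {F : C(G × G, ℂ) | ∃ f₁ f₂ : C(G, ℂ), ∀ p : G × G, F p = f₁ p.1 * f₂ (p.1 * p.2)}
      : Submodule ℂ C(G × G, ℂ)) : Set C(G × G, ℂ)) := by
  set Q := SeparationQuotient G with hQ
  set SG : Set C(G × G, ℂ) :=
    {F : C(G × G, ℂ) | ∃ f₁ f₂ : C(G, ℂ), ∀ p : G × G, F p = f₁ p.1 * f₂ (p.1 * p.2)} with hSG
  set SQ : Set C(Q × Q, ℂ) :=
    {F : C(Q × Q, ℂ) | ∃ f₁ f₂ : C(Q, ℂ), ∀ p : Q × Q, F p = f₁ p.1 * f₂ (p.1 * p.2)} with hSQ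
  -- pullback along the quotient map
  let mkmk : C(G × G, Q × Q) :=
    ⟨fun p => (mk p.1, mk p.2),
      ((continuous_mk.comp continuous_fst).prodMk (continuous_mk.comp continuous_snd))⟩
  let Φ : C(Q × Q, ℂ) → C(G × G, ℂ) := fun F => F.comp mkmk
  have hΦcont : Continuous Φ := ContinuousMap.continuous_precomp mkmk
  -- Φ is surjective
  have hΦsurj : ∀ F : C(G × G, ℂ), ∃ F' : C(Q × Q, ℂ), Φ F' = F := by
    intro F
    have hconst : ∀ a b c d : G, Inseparable a c → Inseparable b d → F (a, b) = F (c, d) := by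
      intro a b c d hac hbd
      exact ((hac.prod hbd).map F.continuous).eq
    refine ⟨⟨uncurry (SeparationQuotient.lift₂ (fun a b => F (a, b)) hconst), ?_⟩, ?_⟩
    · rw [SeparationQuotient.continuous_lift₂]
      exact F.continuous
    · ext ⟨g, h⟩
      simp [Φ, mkmk, uncurry, SeparationQuotient.lift₂_mk]
  -- Φ maps the span into the span
  have hΦspan : ∀ x ∈ Submodule.span ℂ SQ, Φ x ∈ Submodule.span ℂ SG := by
    intro x hx
    induction hx using Submodule.span_induction with
    | mem z hz =>
        obtain ⟨f₁, f₂, h⟩ := hz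
        refine Submodule.subset_span ⟨f₁.comp ⟨mk, continuous_mk⟩, f₂.comp ⟨mk, continuous_mk⟩,
          fun p => ?_⟩
        have := h (mk p.1, mk p.2)
        simpa [Φ, mkmk, SeparationQuotient.mk_mul] using this
    | zero => simpa [Φ] using Submodule.zero_mem _
    | add a b _ _ ha hb =>
        have : Φ (a + b) = Φ a + Φ b := by ext p; simp [Φ]
        rw [this]; exact Submodule.add_mem _ ha hb
    | smul c a _ ha =>
        have : Φ (c • a) = c • Φ a := by ext p; simp [Φ]
        rw [this]; exact Submodule.smul_mem _ c ha
  -- conclude using density in the Hausdorff quotient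
  haveI : IsTopologicalGroup Q := ⟨⟩
  haveI : CompactSpace Q := Quotient.compactSpace
  have hdQ := aux_dense Q
  rw [dense_iff_closure_eq] at hdQ ⊢
  apply Set.eq_univ_of_univ_subset
  intro F _
  obtain ⟨F', hF'⟩ := hΦsurj F
  have h1 : F' ∈ closure ((Submodule.span ℂ SQ : Submodule ℂ C(Q × Q, ℂ)) : Set C(Q × Q, ℂ)) := by
    rw [hdQ]; trivial
  have h2 : F ∈ Φ '' closure ((Submodule.span ℂ SQ : Submodule ℂ C(Q × Q, ℂ)) : Set _) :=
    ⟨F', h1, hF'⟩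
  have h3 := image_closure_subset_closure_image (f := Φ)
    (s := ((Submodule.span ℂ SQ : Submodule ℂ C(Q × Q, ℂ)) : Set _)) hΦcont
  have h4 : Φ '' ((Submodule.span ℂ SQ : Submodule ℂ C(Q × Q, ℂ)) : Set _) ⊆
      ((Submodule.span ℂ SG : Submodule ℂ C(G × G, ℂ)) : Set _) := by
    rintro _ ⟨x, hx, rfl⟩; exact hΦspan x hx
  exact closure_mono h4 (h3 h2)
end

section
/- Let G be a topological group with identity e, and let p : X → G be a covering map with X path-connected and locally path-connected. Fix a point ẽ ∈ p⁻¹(e). Then there exists a unique topological group structure on X with identity ẽ such that p is a continuous group homomorphism. -/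
open unitInterval Set Filter Topology

section Aux

variable {α β : Type*} [TopologicalSpace α] [TopologicalSpace β]

theorem IsPathConnected.prod' {s : Set α} {t : Set β} (hs : IsPathConnected s)
    (ht : IsPathConnected t) : IsPathConnected (s ×ˢ t) := by
  obtain ⟨a, ha, hsa⟩ := hs
  obtain ⟨b, hb, htb⟩ := ht
  refine ⟨(a, b), mk_mem_prod ha hb, ?_⟩
  rintro ⟨c, d⟩ ⟨hc, hd⟩
  exact ⟨((hsa hc).somePath.prod (htb hd).somePath),
    fun τ => ⟨(hsa hc).somePath_mem τ, (htb hd).somePath_mem τ⟩⟩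

instance PathConnectedSpace.prodInst [PathConnectedSpace α] [PathConnectedSpace β] :
    PathConnectedSpace (α × β) where
  nonempty := inferInstance
  joined := fun x y =>
    ⟨(PathConnectedSpace.somePath x.1 y.1).prod (PathConnectedSpace.somePath x.2 y.2)⟩

instance LocPathConnectedSpace.prodInst [LocallyPathConnectedSpace α] [LocallyPathConnectedSpace β] :
    LocallyPathConnectedSpace (α × β) := by
  refine LocPathConnectedSpace.of_bases
    (p := fun (x : α × β) (st : Set α × Set β) =>
      ((st.1 ∈ 𝓝 x.1 ∧ IsPathConnected st.1) ∧ st.2 ∈ 𝓝 x.2 ∧ IsPathConnected st.2))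
    (s := fun _ st => st.1 ×ˢ st.2) (fun x => ?_) ?_
  · exact (path_connected_basis x.1).prod_nhds (path_connected_basis x.2)
  · rintro x ⟨s, t⟩ ⟨⟨-, hs⟩, -, ht⟩
    exact hs.prod' ht

end Aux


section Lifting

variable {E B : Type*} [TopologicalSpace E] [TopologicalSpace B] {p : E → B}

theorem IsCoveringMap.lift_unique' (hp : IsCoveringMap p) {A : Type*} [TopologicalSpace A]
    [PreconnectedSpace A] {g₁ g₂ : A → E} (h₁ : Continuous g₁) (h₂ : Continuous g₂)
    (h : ∀ a, p (g₁ a) = p (g₂ a)) {a₀ : A} (ha : g₁ a₀ = g₂ a₀) : g₁ = g₂ :=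
  hp.eq_of_comp_eq h₁ h₂ (funext h) a₀ ha

theorem IsCoveringMap.isClopen_range' (hp : IsCoveringMap p) : IsClopen (range p) := by
  have key : ∀ x, ∃ U : Set B, x ∈ U ∧ IsOpen U ∧ (x ∈ range p → U ⊆ range p) ∧
      (x ∉ range p → U ⊆ (range p)ᶜ) := by
    intro x
    obtain ⟨-, U, hxU, hU, -, H, hH⟩ := hp x
    refine ⟨U, hxU, hU, ?_, ?_⟩
    · rintro ⟨e, rfl⟩ y hy
      set w := H.symm (⟨y, hy⟩, ⟨e, rfl⟩) with hw
      have h := hH w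
      rw [hw, H.apply_symm_apply] at h
      exact ⟨w, by simpa using h.symm⟩
    · rintro hx y hy ⟨z, rfl⟩
      exact hx ⟨_, (H ⟨z, hy⟩).2.2⟩
  constructor
  · rw [← isOpen_compl_iff, isOpen_iff_forall_mem_open]
    intro x hx
    obtain ⟨U, hxU, hU, -, h2⟩ := key x
    exact ⟨U, h2 hx, hU, hxU⟩
  · rw [isOpen_iff_forall_mem_open]
    intro x hx
    obtain ⟨U, hxU, hU, h1, -⟩ := key x
    exact ⟨U, h1 hx, hU, hxU⟩

theorem IsCoveringMap.nonempty_fiber_path (hp : IsCoveringMap p) {γ : I → B} (hγ : Continuous γ)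
    (x₀ : E) (hx₀ : p x₀ = γ 0) (t : I) : Nonempty (p ⁻¹' {γ t}) := by
  have hc := hp.isClopen_range'.preimage hγ
  have h : γ ⁻¹' range p = univ :=
    (isClopen_iff.1 hc).resolve_left (Set.Nonempty.ne_empty ⟨0, x₀, hx₀⟩)
  have ht : t ∈ γ ⁻¹' range p := by rw [h]; trivial
  obtain ⟨e, he⟩ := ht
  exact ⟨⟨e, he⟩⟩

theorem IsCoveringMap.homotopy_lift (hp : IsCoveringMap p) {A : Type*} [TopologicalSpace A]
    {K : A × I → B} (hK : Continuous K) {g₀ : A → E} (hg₀ : Continuous g₀)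
    (h0 : ∀ a, p (g₀ a) = K (a, 0)) :
    ∃ L : A × I → E, Continuous L ∧ (∀ q, p (L q) = K q) ∧ ∀ a, L (a, 0) = g₀ a := by
  have loc : ∀ a : A, ∃ V : Set A, IsOpen V ∧ a ∈ V ∧ ∃ L : A × I → E,
      ContinuousOn L (V ×ˢ (univ : Set I)) ∧ (∀ q ∈ V ×ˢ (univ : Set I), p (L q) = K q) ∧
      ∀ x ∈ V, L (x, 0) = g₀ x := by
    intro a
    have hKa : Continuous fun s : I => K (a, s) := hK.comp (continuous_const.prodMk continuous_id)
    have hne : ∀ t : I, Nonempty (p ⁻¹' {K (a, t)}) := hp.nonempty_fiber_path hKa (g₀ a) (h0 a)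
    have hc₁ : ∀ t : I, IsOpen ((fun s : I => K (a, s)) ⁻¹'
        ((hp (K (a, t))).toTrivialization.baseSet)) :=
      fun t => ((hp (K (a, t))).toTrivialization.open_baseSet).preimage hKa
    have hc₂ : (univ : Set I) ⊆ ⋃ t, (fun s : I => K (a, s)) ⁻¹'
        ((hp (K (a, t))).toTrivialization.baseSet) :=
      fun s _ => mem_iUnion.2 ⟨s, (hp (K (a, s))).mem_toTrivialization_baseSet⟩
    obtain ⟨t, ht0, htm, ⟨n₀, ht1⟩, hsub⟩ :=
      exists_monotone_Icc_subset_open_cover_unitInterval hc₁ hc₂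
    choose i hi using hsub
    set T : ∀ n : ℕ, Bundle.Trivialization (p ⁻¹' {K (a, i n)}) p :=
      fun n => (hp (K (a, i n))).toTrivialization with hT
    have hiT : ∀ n, ∀ s ∈ Icc (t n) (t (n + 1)), K (a, s) ∈ (T n).baseSet := fun n s hs => hi n hs
    -- tube lemma
    have tube : ∀ n, ∃ U : Set A, IsOpen U ∧ a ∈ U ∧
        ∀ x ∈ U, ∀ s ∈ Icc (t n) (t (n + 1)), K (x, s) ∈ (T n).baseSet := by
      intro n
      have hsub2 : ({a} : Set A) ×ˢ Icc (t n) (t (n + 1)) ⊆ K ⁻¹' (T n).baseSet := by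
        rintro ⟨x, s⟩ ⟨hx, hs⟩
        rw [mem_singleton_iff] at hx
        subst hx
        exact hiT n s hs
      obtain ⟨u, v, hu, -, hau, hIv, huv⟩ := generalized_tube_lemma isCompact_singleton
        (isClosed_Icc (a := t n) (b := t (n + 1))).isCompact
        ((T n).open_baseSet.preimage hK) hsub2
      exact ⟨u, hu, hau rfl, fun x hx s hs => huv (mk_mem_prod hx (hIv hs))⟩
    choose U hUo hUa hU using tube
    refine ⟨⋂ n ∈ Finset.range (n₀ + 1), U n,
      isOpen_biInter_finset (fun n _ => hUo n), mem_iInter₂.2 fun n _ => hUa n, ?_⟩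
    set V : Set A := ⋂ n ∈ Finset.range (n₀ + 1), U n with hV
    have hVU : ∀ n, n ≤ n₀ → V ⊆ U n := fun n hn =>
      biInter_subset_of_mem (Finset.mem_range.2 (Nat.lt_succ_of_le hn))
    have main : ∀ n : ℕ, ∃ L : A × I → E, ContinuousOn L (V ×ˢ Icc 0 (t n)) ∧
        (∀ x ∈ V, ∀ s : I, s ∈ Icc 0 (t n) → p (L (x, s)) = K (x, s)) ∧
        ∀ x, L (x, 0) = g₀ x := by
      intro n
      induction n with
      | zero =>
        refine ⟨fun q => g₀ q.1, (hg₀.comp continuous_fst).continuousOn, ?_, fun _ => rfl⟩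
        rintro x - s ⟨-, hs⟩
        rw [ht0] at hs
        have : s = 0 := le_antisymm hs unitInterval.nonneg'
        rw [this, h0]
      | succ n ih =>
        obtain ⟨L, hLc, hLp, hL0⟩ := ih
        by_cases hn : n₀ ≤ n
        · refine ⟨L, ?_, ?_, hL0⟩
          · rwa [ht1 (n+1) (hn.trans n.le_succ), ← ht1 n hn]
          · rw [ht1 (n+1) (hn.trans n.le_succ), ← ht1 n hn]; exact hLp
        push_neg at hn
        have hVn := hVU n hn.le
        have htn : t n ∈ Icc (0:I) (t n) := ⟨unitInterval.nonneg', le_refl _⟩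
        have htn' : t n ∈ Icc (t n) (t (n+1)) := ⟨le_refl _, htm n.le_succ⟩
        -- the lift at time t n
        have hℓp : ∀ x ∈ V, p (L (x, t n)) = K (x, t n) := fun x hx => hLp x hx _ htn
        have hsrc : ∀ x ∈ V, L (x, t n) ∈ (T n).source := fun x hx =>
          (T n).mem_source.2 (by rw [hℓp x hx]; exact hU n x (hVn hx) _ htn')
        set S : A × I → E := fun q =>
          (T n).toOpenPartialHomeomorph.symm (K q, ((T n) (L (q.1, t n))).2) with hS
        have hStgt : ∀ q ∈ V ×ˢ Icc (t n) (t (n+1)),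
            (K q, ((T n) (L (q.1, t n))).2) ∈ (T n).target := by
          rintro ⟨x, s⟩ ⟨hx, hs⟩
          exact (T n).mem_target.2 (hU n x (hVn hx) s hs)
        have hSp : ∀ q ∈ V ×ˢ Icc (t n) (t (n+1)), p (S q) = K q := fun q hq =>
          (T n).proj_symm_apply (hStgt q hq)
        have hSc : ContinuousOn S (V ×ˢ Icc (t n) (t (n+1))) := by
          have hℓc : ContinuousOn (fun x : A => L (x, t n)) V := by
            have : ContinuousOn (fun x : A => (x, t n)) V :=
              (continuous_id.prodMk continuous_const).continuousOn
            exact hLc.comp this (fun x hx => mk_mem_prod hx htn)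
          have hTL : ContinuousOn (fun x : A => (T n) (L (x, t n))) V :=
            by
              refine ContinuousOn.comp ?_ hℓc fun x hx => hsrc x hx
              exact (T n).toOpenPartialHomeomorph.continuousOn
          have hTc : ContinuousOn (fun x : A => ((T n) (L (x, t n))).2) V :=
            continuous_snd.comp_continuousOn hTL
          have hinner : ContinuousOn (fun q : A × I => (K q, ((T n) (L (q.1, t n))).2))
              (V ×ˢ Icc (t n) (t (n + 1))) := by
            apply ContinuousOn.prodMk (hK.continuousOn)
            exact hTc.comp (continuousOn_fst) (fun q hq => hq.1)
          exact (T n).toOpenPartialHomeomorph.continuousOn_symm.comp hinner hStgt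
        have hbdry : ∀ x ∈ V, S (x, t n) = L (x, t n) := by
          intro x hx
          have : (K (x, t n), ((T n) (L (x, t n))).2) = (T n) (L (x, t n)) := by
            rw [← hℓp x hx]
            exact (T n).mk_proj_snd (hsrc x hx)
          show (T n).toOpenPartialHomeomorph.symm (K (x, t n), ((T n) (L (x, t n))).2) = L (x, t n)
          rw [this]
          exact (T n).toOpenPartialHomeomorph.left_inv (hsrc x hx)
        -- glue
        refine ⟨fun q => if q.2 ≤ t n then L q else S q, ?_, ?_, ?_⟩
        · apply ContinuousOn.if
          · rintro ⟨x, s⟩ ⟨hq, hfr⟩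
            rw [frontier_eq_closure_inter_closure] at hfr
            have h₁ : s ≤ t n := by
              have := hfr.1
              rwa [(isClosed_le continuous_snd continuous_const).closure_eq] at this
            have h₂ : t n ≤ s := by
              have h4 : closure {q : A × I | q.2 ≤ t n}ᶜ ⊆ {q : A × I | t n ≤ q.2} := by
                apply closure_minimal ?_ (isClosed_le continuous_const continuous_snd)
                intro q hq
                exact le_of_not_ge (by simpa using hq)
              exact h4 hfr.2
            have hs : s = t n := le_antisymm h₁ h₂
            rw [show ((x, s) : A × I) = (x, t n) by rw [hs]]
            exact (hbdry x hq.1).symm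
          · apply hLc.mono
            rintro ⟨x, s⟩ ⟨⟨hx, hs⟩, hcl⟩
            rw [(isClosed_le continuous_snd continuous_const).closure_eq] at hcl
            exact ⟨hx, unitInterval.nonneg', hcl⟩
          · apply hSc.mono
            rintro ⟨x, s⟩ ⟨⟨hx, hs0, hs⟩, hcl⟩
            have h4 : closure {q : A × I | ¬ q.2 ≤ t n} ⊆ {q : A × I | t n ≤ q.2} := by
              apply closure_minimal ?_ (isClosed_le continuous_const continuous_snd)
              intro q hq
              exact le_of_not_ge hq
            exact ⟨hx, h4 hcl, hs⟩
        · rintro x hx s ⟨-, hs⟩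
          dsimp only
          by_cases h : s ≤ t n
          · rw [if_pos h]; exact hLp x hx s ⟨unitInterval.nonneg', h⟩
          · rw [if_neg h]; exact hSp (x, s) ⟨hx, le_of_not_ge h, hs⟩
        · intro x
          dsimp only
          rw [if_pos unitInterval.nonneg', hL0]
    obtain ⟨L, hLc, hLp, hL0⟩ := main n₀
    have hIcc : Icc (0:I) (t n₀) = univ := by
      rw [ht1 n₀ le_rfl]
      ext s; simp [unitInterval.nonneg', unitInterval.le_one']
    rw [hIcc] at hLc
    refine ⟨L, hLc, ?_, fun x hx => hL0 x⟩
    intro q hq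
    rcases hq with ⟨hq1, -⟩
    exact hLp q.1 hq1 q.2 (by rw [hIcc]; trivial) |>.trans (by rfl)
  choose V hVo hVa L hLc hLp hL0 using loc
  have hcont : ∀ (c b : A), b ∈ V c → Continuous fun r : I => L c (b, r) := by
    intro c b hbc
    exact (hLc c).comp_continuous (continuous_const.prodMk continuous_id)
      (fun r => mk_mem_prod hbc trivial)
  have heq : ∀ (c b : A), b ∈ V c → (fun r : I => L b (b, r)) = fun r => L c (b, r) := by
    intro c b hbc
    apply hp.lift_unique' (hcont b b (hVa b)) (hcont c b hbc)
    · intro r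
      rw [hLp b (b, r) (mk_mem_prod (hVa b) trivial),
        hLp c (b, r) (mk_mem_prod hbc trivial)]
    · show L b (b, 0) = L c (b, 0)
      rw [hL0 b b (hVa b), hL0 c b hbc]
  refine ⟨fun q => L q.1 q, ?_, ?_, fun a => hL0 a a (hVa a)⟩
  · rw [continuous_iff_continuousAt]
    rintro ⟨a, s⟩
    have hnhds : V a ×ˢ (univ : Set I) ∈ 𝓝 (a, s) :=
      prod_mem_nhds ((hVo a).mem_nhds (hVa a)) univ_mem
    apply ((hLc a).continuousAt hnhds).congr
    filter_upwards [hnhds] with q hq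
    exact (congrFun (heq a q.1 hq.1) q.2).symm
  · intro q
    exact hLp q.1 q (mk_mem_prod (hVa q.1) trivial)

theorem IsCoveringMap.path_lift (hp : IsCoveringMap p) {γ : I → B} (hγ : Continuous γ)
    (x₀ : E) (hx₀ : p x₀ = γ 0) :
    ∃ Γ : I → E, Continuous Γ ∧ (∀ s, p (Γ s) = γ s) ∧ Γ 0 = x₀ := by
  obtain ⟨L, hL, hLp, hL0⟩ := hp.homotopy_lift (A := Unit) (K := fun q => γ q.2)
    (hγ.comp continuous_snd) (g₀ := fun _ => x₀) continuous_const (fun _ => hx₀)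
  exact ⟨fun s => L ((), s), hL.comp (continuous_const.prodMk continuous_id),
    fun s => hLp _, hL0 _⟩

theorem IsCoveringMap.lift_of_loops (hp : IsCoveringMap p) {A : Type*} [TopologicalSpace A]
    [PathConnectedSpace A] [LocallyPathConnectedSpace A] {f : A → B} (hf : Continuous f)
    (a₀ : A) (x₀ : E) (hx₀ : p x₀ = f a₀)
    (hloop : ∀ ℓ : Path a₀ a₀, ∀ Γ : I → E, Continuous Γ → (∀ s, p (Γ s) = f (ℓ s)) →
      Γ 0 = x₀ → Γ 1 = x₀) :
    ∃ g : A → E, Continuous g ∧ (∀ a, p (g a) = f a) ∧ g a₀ = x₀ := by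
  have lift : ∀ {a b : A} (δ : Path a b) (x : E), p x = f a →
      ∃ Γ : I → E, Continuous Γ ∧ (∀ s, p (Γ s) = f (δ s)) ∧ Γ 0 = x := by
    intro a b δ x hx
    exact hp.path_lift (hf.comp δ.continuous) x
      (by simp only [Function.comp_apply, δ.source]; exact hx)
  have H : ∀ a : A, ∃ Γ : I → E, Continuous Γ ∧
      (∀ s, p (Γ s) = f ((PathConnectedSpace.somePath a₀ a) s)) ∧ Γ 0 = x₀ :=
    fun a => lift _ _ hx₀
  choose Γc hΓc₁ hΓc₂ hΓc₃ using H
  set g : A → E := fun a => Γc a 1 with hg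
  have key : ∀ (a : A) (δ : Path a₀ a) (Θ : I → E), Continuous Θ → (∀ s, p (Θ s) = f (δ s)) →
      Θ 0 = x₀ → Θ 1 = g a := by
    intro a δ Θ hΘ hΘp hΘ0
    obtain ⟨Ψ, hΨc, hΨp, hΨ0⟩ := lift (PathConnectedSpace.somePath a₀ a).symm (Θ 1)
      (by rw [hΘp 1, δ.target])
    set PΘ : Path x₀ (Θ 1) := ⟨⟨Θ, hΘ⟩, hΘ0, rfl⟩ with hPΘ
    set PΨ : Path (Θ 1) (Ψ 1) := ⟨⟨Ψ, hΨc⟩, hΨ0, rfl⟩ with hPΨ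
    have hΦ1 : Ψ 1 = x₀ := by
      have h2 := hloop (δ.trans (PathConnectedSpace.somePath a₀ a).symm) (PΘ.trans PΨ)
        (PΘ.trans PΨ).continuous ?_ (PΘ.trans PΨ).source
      · exact ((PΘ.trans PΨ).target).symm.trans h2
      · intro s
        rw [Path.trans_apply, Path.trans_apply]
        split_ifs with h
        · exact hΘp _
        · exact hΨp _
    have hρ : (fun s => Ψ (σ s)) = Γc a := by
      apply hp.lift_unique' (hΨc.comp unitInterval.continuous_symm) (hΓc₁ a)
      · intro s
        show p (Ψ (σ s)) = p (Γc a s)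
        rw [hΨp, hΓc₂]
        congr 1
        show (PathConnectedSpace.somePath a₀ a) (σ (σ s)) = _
        rw [unitInterval.symm_symm]
      · show Ψ (σ 0) = Γc a 0
        rw [unitInterval.symm_zero, hΦ1, hΓc₃]
    have h3 : Ψ (σ 1) = Γc a 1 := congrFun hρ 1
    rwa [unitInterval.symm_one, hΨ0] at h3
  have hgp : ∀ a, p (g a) = f a := by
    intro a
    show p (Γc a 1) = f a
    rw [hΓc₂ a 1, (PathConnectedSpace.somePath a₀ a).target]
  have hg₀ : g a₀ = x₀ := hloop _ (Γc a₀) (hΓc₁ _) (hΓc₂ _) (hΓc₃ _)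
  refine ⟨g, ?_, hgp, hg₀⟩
  rw [continuous_iff_continuousAt]
  intro a
  haveI : Nonempty (p ⁻¹' {f a}) := ⟨⟨g a, hgp a⟩⟩
  set T := (hp (f a)).toTrivialization with hT
  have hfa : f a ∈ T.baseSet := (hp (f a)).mem_toTrivialization_baseSet
  obtain ⟨W, ⟨hWn, hWc⟩, hWsub⟩ := (path_connected_basis a).mem_iff.mp
    (hf.continuousAt.preimage_mem_nhds (T.open_baseSet.mem_nhds hfa))
  have hga_src : g a ∈ T.source := T.mem_source.2 (by rw [hgp a]; exact hfa)
  have h5 : (f a, (T (g a)).2) = T (g a) := by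
    have h5' := T.mk_proj_snd hga_src
    rw [hgp a] at h5'
    exact h5' 
  have claim : ∀ b ∈ W, g b = T.toOpenPartialHomeomorph.symm (f b, (T (g a)).2) := by
    intro b hb
    have hab : JoinedIn W a b := hWc.joinedIn a (mem_of_mem_nhds hWn) b hb
    set ε := hab.somePath with hε
    set ρ : I → E := fun s => T.toOpenPartialHomeomorph.symm (f (ε s), (T (g a)).2) with hρdef
    have hmem : ∀ s, (f (ε s), (T (g a)).2) ∈ T.target :=
      fun s => T.mem_target.2 (hWsub (hab.somePath_mem s))
    have hρc : Continuous ρ := T.toOpenPartialHomeomorph.continuousOn_symm.comp_continuous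
      ((hf.comp ε.continuous).prodMk continuous_const) hmem
    have hρp : ∀ s, p (ρ s) = f (ε s) := fun s => T.proj_symm_apply (hmem s)
    have hρ0 : ρ 0 = g a := by
      show T.toOpenPartialHomeomorph.symm (f (ε 0), (T (g a)).2) = g a
      rw [ε.source]
      exact (congrArg T.toOpenPartialHomeomorph.symm h5).trans
        (T.toOpenPartialHomeomorph.left_inv hga_src)
    set Pa : Path x₀ (g a) := ⟨⟨Γc a, hΓc₁ a⟩, hΓc₃ a, rfl⟩ with hPa
    set Pρ : Path (g a) (ρ 1) := ⟨⟨ρ, hρc⟩, hρ0, rfl⟩ with hPρ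
    have hkey := key b ((PathConnectedSpace.somePath a₀ a).trans ε) (Pa.trans Pρ)
      (Pa.trans Pρ).continuous ?_ (Pa.trans Pρ).source
    · have h7 : ρ 1 = T.toOpenPartialHomeomorph.symm (f b, (T (g a)).2) := by
        show T.toOpenPartialHomeomorph.symm (f (ε 1), (T (g a)).2) = _
        rw [ε.target]
      exact (hkey.symm.trans ((Pa.trans Pρ).target)).trans h7
    · intro s
      rw [Path.trans_apply, Path.trans_apply]
      split_ifs with h
      · exact hΓc₂ a _
      · exact hρp _
  have hTcont : ContinuousAt (fun b => T.toOpenPartialHomeomorph.symm (f b, (T (g a)).2)) a := by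
    apply (T.toOpenPartialHomeomorph.continuousOn_symm.continuousAt
      (T.open_target.mem_nhds (T.mem_target.2 hfa))).comp
    exact hf.continuousAt.prodMk continuousAt_const
  apply hTcont.congr
  filter_upwards [hWn] with b hb
  exact (claim b hb).symm

end Lifting


/-- The property that `(mul, inv)` is a topological group structure on the covering
space `X` with identity `e₀` making `p` a homomorphism. -/
def IsLiftedGroupStructure {G X : Type*} [TopologicalSpace G] [Group G]
    [TopologicalSpace X] (p : X → G) (e₀ : X) (mul : X → X → X) (inv : X → X) : Prop :=
  Continuous (fun q : X × X => mul q.1 q.2) ∧ Continuous inv ∧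
  (∀ x y z : X, mul (mul x y) z = mul x (mul y z)) ∧
  (∀ x : X, mul e₀ x = x) ∧ (∀ x : X, mul x e₀ = x) ∧
  (∀ x : X, mul (inv x) x = e₀) ∧ (∀ x : X, mul x (inv x) = e₀) ∧
  (∀ x y : X, p (mul x y) = p x * p y)

/-- If `G` is a topological group with identity `e` and `p : X → G` is a covering map
with `X` path-connected and locally path-connected, then for any point `e₀` in the fibre
over `e` there is a unique topological group structure on `X` with identity `e₀` such
that `p` is a (continuous) group homomorphism. -/
theorem covering_space_of_topological_group_unique_group_structure
    (G X : Type*) [TopologicalSpace G] [Group G] [IsTopologicalGroup G]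
    [TopologicalSpace X] [PathConnectedSpace X] [LocallyPathConnectedSpace X]
    (p : X → G) (hp : IsCoveringMap p) (e₀ : X) (he : p e₀ = 1) :
    (∃ mul inv, IsLiftedGroupStructure p e₀ mul inv) ∧
    (∀ mul₁ inv₁ mul₂ inv₂, IsLiftedGroupStructure p e₀ mul₁ inv₁ →
      IsLiftedGroupStructure p e₀ mul₂ inv₂ → mul₁ = mul₂ ∧ inv₁ = inv₂) := by
  constructor
  · -- Existence.
    -- the multiplication: lift of (x, y) ↦ p x * p y
    have hfm : Continuous (fun q : X × X => p q.1 * p q.2) :=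
      (hp.continuous.comp continuous_fst).mul (hp.continuous.comp continuous_snd)
    have mulloop : ∀ ℓ : Path ((e₀, e₀) : X × X) (e₀, e₀), ∀ Γ : I → X, Continuous Γ →
        (∀ s, p (Γ s) = p ((ℓ s).1) * p ((ℓ s).2)) → Γ 0 = e₀ → Γ 1 = e₀ := by
      intro ℓ Γ hΓc hΓp hΓ0
      set a : Path e₀ e₀ := ℓ.map continuous_fst with ha
      set b : Path e₀ e₀ := ℓ.map continuous_snd with hb
      obtain ⟨L, hLc, hLp, hL0⟩ := hp.homotopy_lift (A := I)
        (K := fun q : I × I => p (a q.1) * p (b q.2))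
        ((hp.continuous.comp (a.continuous.comp continuous_fst)).mul
          (hp.continuous.comp (b.continuous.comp continuous_snd)))
        (g₀ := fun s => a s) a.continuous (by
          intro s
          show p (a s) = p (a s) * p (b 0)
          rw [b.source, he, mul_one])
      have hedge : (fun u : I => L (1, u)) = fun u => b u := by
        apply hp.lift_unique' (a₀ := 0) (hLc.comp (continuous_const.prodMk continuous_id))
          b.continuous
        · intro u
          show p (L (1, u)) = p (b u)
          rw [hLp (1, u)]
          show p (a 1) * p (b u) = p (b u)
          rw [a.target, he, one_mul]
        · show L (1, 0) = b 0
          rw [hL0 1, a.target, b.source]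
      have hdiag : Γ = fun u : I => L (u, u) := by
        apply hp.lift_unique' (a₀ := 0) hΓc (hLc.comp (continuous_id.prodMk continuous_id))
        · intro u
          show p (Γ u) = p (L (u, u))
          rw [hΓp u, hLp (u, u)]
          rfl
        · show Γ 0 = L (0, 0)
          rw [hΓ0, hL0 0, a.source]
      calc Γ 1 = L (1, 1) := congrFun hdiag 1
        _ = b 1 := congrFun hedge 1
        _ = e₀ := b.target
    obtain ⟨m, hmc, hmp, hm0⟩ := hp.lift_of_loops (f := fun q : X × X => p q.1 * p q.2) hfm
      (e₀, e₀) e₀ (by show p e₀ = p e₀ * p e₀; rw [he, one_mul]) mulloop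
    -- identity laws
    have hidl : ∀ x : X, m (e₀, x) = x := by
      have h : (fun x : X => m (e₀, x)) = fun x => x := by
        apply hp.lift_unique' (a₀ := e₀) (hmc.comp (continuous_const.prodMk continuous_id))
          continuous_id
        · intro x
          show p (m (e₀, x)) = p x
          rw [hmp (e₀, x)]
          show p e₀ * p x = p x
          rw [he, one_mul]
        · exact hm0
      exact fun x => congrFun h x
    have hidr : ∀ x : X, m (x, e₀) = x := by
      have h : (fun x : X => m (x, e₀)) = fun x => x := by
        apply hp.lift_unique' (a₀ := e₀) (hmc.comp (continuous_id.prodMk continuous_const))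
          continuous_id
        · intro x
          show p (m (x, e₀)) = p x
          rw [hmp (x, e₀)]
          show p x * p e₀ = p x
          rw [he, mul_one]
        · exact hm0
      exact fun x => congrFun h x
    -- associativity
    have hassoc : ∀ x y z : X, m (m (x, y), z) = m (x, m (y, z)) := by
      have h : (fun w : X × X × X => m (m (w.1, w.2.1), w.2.2)) =
          fun w => m (w.1, m (w.2.1, w.2.2)) := by
        apply hp.lift_unique' (a₀ := ((e₀, e₀, e₀) : X × X × X))
          (hmc.comp ((hmc.comp (continuous_fst.prodMk
            (continuous_fst.comp continuous_snd))).prodMk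
            (continuous_snd.comp continuous_snd)))
          (hmc.comp (continuous_fst.prodMk (hmc.comp
            ((continuous_fst.comp continuous_snd).prodMk
            (continuous_snd.comp continuous_snd)))))
        · intro w
          show p (m (m (w.1, w.2.1), w.2.2)) = p (m (w.1, m (w.2.1, w.2.2)))
          rw [hmp, hmp, hmp, hmp]
          exact mul_assoc _ _ _
        · show m (m (e₀, e₀), e₀) = m (e₀, m (e₀, e₀))
          rw [hm0]
      exact fun x y z => congrFun h (x, y, z)
    -- the inverse: lift of x ↦ (p x)⁻¹
    have invloop : ∀ ℓ : Path e₀ e₀, ∀ Γ : I → X, Continuous Γ →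
        (∀ s, p (Γ s) = (p (ℓ s))⁻¹) → Γ 0 = e₀ → Γ 1 = e₀ := by
      intro ℓ Γ hΓc hΓp hΓ0
      have hc : (fun s : I => m (ℓ s, Γ s)) = fun _ => e₀ := by
        apply hp.lift_unique' (a₀ := 0) (hmc.comp (ℓ.continuous.prodMk hΓc)) continuous_const
        · intro s
          show p (m (ℓ s, Γ s)) = p e₀
          rw [hmp, hΓp s, he]
          exact mul_inv_cancel _
        · show m (ℓ 0, Γ 0) = e₀
          rw [ℓ.source, hΓ0, hm0]
      have h1 : m (ℓ 1, Γ 1) = e₀ := congrFun hc 1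
      rw [ℓ.target] at h1
      exact (hidl (Γ 1)).symm.trans h1
    obtain ⟨inv, hic, hip, hi0⟩ := hp.lift_of_loops (f := fun x : X => (p x)⁻¹)
      hp.continuous.inv e₀ e₀ (by show p e₀ = (p e₀)⁻¹; rw [he, inv_one]) invloop
    have hinvl : ∀ x : X, m (inv x, x) = e₀ := by
      have h : (fun x : X => m (inv x, x)) = fun _ => e₀ := by
        apply hp.lift_unique' (a₀ := e₀) (hmc.comp (hic.prodMk continuous_id)) continuous_const
        · intro x
          show p (m (inv x, x)) = p e₀
          rw [hmp, hip x, he]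
          exact inv_mul_cancel _
        · show m (inv e₀, e₀) = e₀
          rw [hi0, hm0]
      exact fun x => congrFun h x
    have hinvr : ∀ x : X, m (x, inv x) = e₀ := by
      have h : (fun x : X => m (x, inv x)) = fun _ => e₀ := by
        apply hp.lift_unique' (a₀ := e₀) (hmc.comp (continuous_id.prodMk hic)) continuous_const
        · intro x
          show p (m (x, inv x)) = p e₀
          rw [hmp, hip x, he]
          exact mul_inv_cancel _
        · show m (e₀, inv e₀) = e₀
          rw [hi0, hm0]
      exact fun x => congrFun h x
    exact ⟨fun x y => m (x, y), inv, hmc, hic, hassoc, hidl, hidr, hinvl, hinvr,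
      fun x y => hmp (x, y)⟩
  · -- Uniqueness.
    rintro mul₁ inv₁ mul₂ inv₂ ⟨hc₁, hci₁, -, hl₁, hr₁, hli₁, -, hhom₁⟩
      ⟨hc₂, hci₂, -, hl₂, hr₂, hli₂, -, hhom₂⟩
    have hmul : mul₁ = mul₂ := by
      have h : (fun q : X × X => mul₁ q.1 q.2) = fun q : X × X => mul₂ q.1 q.2 := by
        apply hp.lift_unique' (a₀ := ((e₀, e₀) : X × X)) hc₁ hc₂
        · intro q
          rw [hhom₁, hhom₂]
        · show mul₁ e₀ e₀ = mul₂ e₀ e₀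
          rw [hl₁, hl₂]
      funext x y
      exact congrFun h (x, y)
    have hpinv₁ : ∀ x, p (inv₁ x) = (p x)⁻¹ := by
      intro x
      have h1 : p (mul₁ (inv₁ x) x) = p (inv₁ x) * p x := hhom₁ _ _
      rw [hli₁, he] at h1
      exact eq_inv_of_mul_eq_one_left h1.symm
    have hpinv₂ : ∀ x, p (inv₂ x) = (p x)⁻¹ := by
      intro x
      have h1 : p (mul₂ (inv₂ x) x) = p (inv₂ x) * p x := hhom₂ _ _
      rw [hli₂, he] at h1
      exact eq_inv_of_mul_eq_one_left h1.symm
    have hinv0₁ : inv₁ e₀ = e₀ := by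
      have := hli₁ e₀
      rwa [hr₁ (inv₁ e₀)] at this
    have hinv0₂ : inv₂ e₀ = e₀ := by
      have := hli₂ e₀
      rwa [hr₂ (inv₂ e₀)] at this
    have hinv : inv₁ = inv₂ := by
      apply hp.lift_unique' (a₀ := e₀) hci₁ hci₂
      · intro x
        rw [hpinv₁, hpinv₂]
      · rw [hinv0₁, hinv0₂]
    exact ⟨hmul, hinv⟩
end
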